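/- Let A ∈ ℝ^{m×n}, B ∈ ℝ^{n×ρ}, Θ₁,…,Θ_k a partition of {1,…,n}, and p^{(o)} the finest-partition optimal probabilities p^{(o)}_ℓ = a_ℓ/Σ_j a_j (a_ℓ = ‖A_{(·,ℓ)}‖₂‖B_{(ℓ,·)}‖₂ > 0). Define q_i = Σ_{ℓ ∈ Θ_i} p^{(o)}_ℓ. Then the estimator based on partition Θ with probabilities q satisfies E[‖AB − Ŝ‖_F²] ≤ (1/c)[(Σ_{ℓ=1}^n a_ℓ)² − ‖AB‖_F²]. -/

import Mathlib

open Finset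

/-- Frobenius norm of a real matrix. -/
noncomputable def frob {m ρ : ℕ} (M : Matrix (Fin m) (Fin ρ) ℝ) : ℝ :=
  Real.sqrt (∑ i, ∑ j, (M i j) ^ 2)

/-- Euclidean (2-)norm of a real vector. -/
noncomputable def enorm2 {n : ℕ} (v : Fin n → ℝ) : ℝ :=
  Real.sqrt (∑ i, (v i) ^ 2)

/-- Spectral (operator 2-)norm of a real matrix. -/
noncomputable def spec {m ρ : ℕ} (M : Matrix (Fin m) (Fin ρ) ℝ) : ℝ :=
  ⨆ x : {x : Fin ρ → ℝ // enorm2 x ≤ 1}, enorm2 (M.mulVec x.1)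

/-- Block product `A_{(·,Θ_ℓ)} B_{(Θ_ℓ,·)} = ∑_{j : Θ j = ℓ} A_{(·,j)} B_{(j,·)}`. -/
noncomputable def blockProd {m n ρ k : ℕ} (A : Matrix (Fin m) (Fin n) ℝ)
    (B : Matrix (Fin n) (Fin ρ) ℝ) (Θ : Fin n → Fin k) (ℓ : Fin k) :
    Matrix (Fin m) (Fin ρ) ℝ :=
  Matrix.of fun i h => ∑ j ∈ Finset.univ.filter (fun j => Θ j = ℓ), A i j * B j h

/-- The randomized estimator `Ŝ` built from a sample `r : Fin c → Fin k`. -/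
noncomputable def Shat {m n ρ k : ℕ} (c : ℕ) (A : Matrix (Fin m) (Fin n) ℝ)
    (B : Matrix (Fin n) (Fin ρ) ℝ) (Θ : Fin n → Fin k) (p : Fin k → ℝ)
    (r : Fin c → Fin k) : Matrix (Fin m) (Fin ρ) ℝ :=
  ((c : ℝ)⁻¹) • ∑ i, (p (r i))⁻¹ • blockProd A B Θ (r i)

/-! ### Auxiliary lemmas -/

lemma marg0 (c k : ℕ) (w : Fin k → ℝ) (hw : ∑ j, w j = 1) :
    ∑ r : Fin c → Fin k, ∏ s, w (r s) = 1 := by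
  rw [← Fintype.piFinset_univ, ← Finset.prod_univ_sum]
  simp [hw]

lemma marg1 (c k : ℕ) (w : Fin k → ℝ) (hw : ∑ j, w j = 1) (t : Fin c) (g : Fin k → ℝ) :
    ∑ r : Fin c → Fin k, (∏ s, w (r s)) * g (r t) = ∑ j, w j * g j := by
  have h1 : ∀ r : Fin c → Fin k, (∏ s, w (r s)) * g (r t)
      = ∏ s, (w (r s) * if s = t then g (r s) else 1) := by
    intro r
    rw [Finset.prod_mul_distrib]
    congr 1
    simp
  simp_rw [h1]
  have key := Finset.prod_univ_sum (fun _ : Fin c => (univ : Finset (Fin k)))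
    (fun s j => w j * if s = t then g j else 1)
  rw [← Fintype.piFinset_univ, ← key]
  rw [Fintype.prod_eq_single t (fun x hx => by simp [hx, hw])]
  simp

lemma marg2 (c k : ℕ) (w : Fin k → ℝ) (hw : ∑ j, w j = 1) (t u : Fin c) (htu : t ≠ u)
    (g h : Fin k → ℝ) :
    ∑ r : Fin c → Fin k, (∏ s, w (r s)) * (g (r t) * h (r u))
      = (∑ j, w j * g j) * (∑ j, w j * h j) := by
  have h1 : ∀ r : Fin c → Fin k, (∏ s, w (r s)) * (g (r t) * h (r u))
      = ∏ s, (w (r s) * (if s = t then g (r s) else 1) * (if s = u then h (r s) else 1)) := by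
    intro r
    rw [Finset.prod_mul_distrib, Finset.prod_mul_distrib]
    simp [htu, Ne.symm htu]
    ring
  simp_rw [h1]
  have key := Finset.prod_univ_sum (fun _ : Fin c => (univ : Finset (Fin k)))
    (fun s j => w j * (if s = t then g j else 1) * (if s = u then h j else 1))
  rw [← Fintype.piFinset_univ, ← key]
  have h2 : ∀ s : Fin c, s ∈ (univ : Finset (Fin c)) → s ∉ ({t, u} : Finset (Fin c)) →
      (∑ j, w j * (if s = t then g j else 1) * (if s = u then h j else 1)) = 1 := by
    intro s _ hs
    simp only [mem_insert, mem_singleton, not_or] at hs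
    simp [hs.1, hs.2, hw]
  rw [← Finset.prod_subset (Finset.subset_univ ({t, u} : Finset (Fin c))) h2,
    Finset.prod_pair htu]
  simp [htu, Ne.symm htu]

lemma var_lemma (c k : ℕ) (hc : 0 < c) (w g : Fin k → ℝ) (hw : ∑ j, w j = 1) :
    ∑ r : Fin c → Fin k, (∏ s, w (r s)) * ((∑ j, w j * g j) - (c:ℝ)⁻¹ * ∑ t, g (r t)) ^ 2
      = (c:ℝ)⁻¹ * ((∑ j, w j * (g j * g j)) - (∑ j, w j * g j) ^ 2) := by
  have hc' : (c : ℝ) ≠ 0 := Nat.cast_ne_zero.mpr hc.ne'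
  set μ := ∑ j, w j * g j with hμ
  have expand : ∀ r : Fin c → Fin k,
      (∏ s, w (r s)) * (μ - (c:ℝ)⁻¹ * ∑ t, g (r t)) ^ 2
      = (∏ s, w (r s)) * μ ^ 2
        - 2 * μ * (c:ℝ)⁻¹ * ∑ t, (∏ s, w (r s)) * g (r t)
        + (c:ℝ)⁻¹ ^ 2 * ∑ t, ∑ u, (∏ s, w (r s)) * (g (r t) * g (r u)) := by
    intro r
    have h3 : ∑ t, ∑ u, (∏ s, w (r s)) * (g (r t) * g (r u))
        = (∏ s, w (r s)) * (∑ t, g (r t)) ^ 2 := by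
      rw [pow_two, Finset.sum_mul_sum]
      simp_rw [← Finset.mul_sum]
    rw [h3, ← Finset.mul_sum]
    ring
  simp_rw [expand]
  rw [Finset.sum_add_distrib, Finset.sum_sub_distrib]
  -- term 1
  rw [← Finset.sum_mul, marg0 c k w hw, one_mul]
  -- term 2
  have t2 : ∑ r : Fin c → Fin k, 2 * μ * (c:ℝ)⁻¹ * ∑ t, (∏ s, w (r s)) * g (r t)
      = 2 * μ ^ 2 := by
    rw [← Finset.mul_sum, Finset.sum_comm]
    have h4 : ∀ t : Fin c, ∑ r : Fin c → Fin k, (∏ s, w (r s)) * g (r t) = μ :=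
      fun t => marg1 c k w hw t g
    simp_rw [h4]
    rw [Finset.sum_const, card_univ, Fintype.card_fin, nsmul_eq_mul]
    field_simp
  rw [t2]
  -- term 3
  have key : ∀ t u : Fin c, ∑ r : Fin c → Fin k, (∏ s, w (r s)) * (g (r t) * g (r u))
      = if t = u then ∑ j, w j * (g j * g j) else μ * μ := by
    intro t u
    split_ifs with h
    · subst h; exact marg1 c k w hw t (fun j => g j * g j)
    · exact marg2 c k w hw t u h g g
  set E := ∑ j, w j * (g j * g j) with hE
  have t3 : ∑ r : Fin c → Fin k, (c:ℝ)⁻¹ ^ 2 * ∑ t, ∑ u, (∏ s, w (r s)) * (g (r t) * g (r u))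
      = (c:ℝ)⁻¹ ^ 2 * ((c:ℝ) * E + ((c:ℝ) ^ 2 - (c:ℝ)) * (μ * μ)) := by
    rw [← Finset.mul_sum]
    congr 1
    have swap1 : ∑ r : Fin c → Fin k, ∑ t : Fin c, ∑ u, (∏ s, w (r s)) * (g (r t) * g (r u))
        = ∑ t : Fin c, ∑ u : Fin c, ∑ r : Fin c → Fin k, (∏ s, w (r s)) * (g (r t) * g (r u)) := by
      rw [Finset.sum_comm]
      exact Finset.sum_congr rfl fun t _ => Finset.sum_comm
    rw [swap1]
    simp_rw [key]
    have ite_sum : ∀ t : Fin c, ∑ u : Fin c, (if t = u then E else μ * μ)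
        = E + ((c:ℝ) - 1) * (μ * μ) := by
      intro t
      have h5 : ∀ u : Fin c, (if t = u then E else μ * μ)
          = μ * μ + (if t = u then E - μ * μ else 0) := fun u => by split_ifs <;> ring
      simp_rw [h5]
      rw [Finset.sum_add_distrib, Finset.sum_const, Finset.sum_ite_eq, card_univ,
        Fintype.card_fin, nsmul_eq_mul]
      simp
      ring
    simp_rw [ite_sum]
    rw [Finset.sum_const, card_univ, Fintype.card_fin, nsmul_eq_mul]
    ring
  rw [t3]
  field_simp
  ring

lemma frob_nonneg {m ρ : ℕ} (M : Matrix (Fin m) (Fin ρ) ℝ) : 0 ≤ frob M :=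
  Real.sqrt_nonneg _

lemma frob_sq {m ρ : ℕ} (M : Matrix (Fin m) (Fin ρ) ℝ) :
    frob M ^ 2 = ∑ i, ∑ j, (M i j) ^ 2 := by
  apply Real.sq_sqrt
  exact Finset.sum_nonneg fun i _ => Finset.sum_nonneg fun j _ => sq_nonneg _

noncomputable def toE {m ρ : ℕ} (M : Matrix (Fin m) (Fin ρ) ℝ) :
    EuclideanSpace ℝ (Fin m × Fin ρ) :=
  (WithLp.equiv 2 _).symm (fun p : Fin m × Fin ρ => M p.1 p.2)

lemma frob_eq_norm {m ρ : ℕ} (M : Matrix (Fin m) (Fin ρ) ℝ) : frob M = ‖toE M‖ := by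
  rw [EuclideanSpace.norm_eq, frob]
  congr 1
  have h : ∀ p : Fin m × Fin ρ, ‖toE M p‖ ^ 2 = (M p.1 p.2) ^ 2 := fun p => by
    simp [toE, Real.norm_eq_abs, sq_abs]
  simp_rw [h]
  rw [Fintype.sum_prod_type]

lemma frob_sum_le {m ρ n : ℕ} (s : Finset (Fin n)) (f : Fin n → Matrix (Fin m) (Fin ρ) ℝ) :
    frob (∑ ℓ ∈ s, f ℓ) ≤ ∑ ℓ ∈ s, frob (f ℓ) := by
  simp_rw [frob_eq_norm]
  have h : toE (∑ ℓ ∈ s, f ℓ) = ∑ ℓ ∈ s, toE (f ℓ) := by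
    ext p
    simp [toE, Matrix.sum_apply]
  rw [h]
  exact norm_sum_le _ _

lemma frob_outer {m n ρ : ℕ} (A : Matrix (Fin m) (Fin n) ℝ) (B : Matrix (Fin n) (Fin ρ) ℝ)
    (ℓ : Fin n) :
    frob (Matrix.of fun i h => A i ℓ * B ℓ h)
      = enorm2 (fun i => A i ℓ) * enorm2 (fun h => B ℓ h) := by
  rw [frob, enorm2, enorm2, ← Real.sqrt_mul (Finset.sum_nonneg fun i _ => sq_nonneg _)]
  congr 1
  rw [Finset.sum_mul]
  refine Finset.sum_congr rfl fun i _ => ?_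
  rw [Finset.mul_sum]
  exact Finset.sum_congr rfl fun h _ => by simp [mul_pow]

theorem stmt11 (m n ρ k c : ℕ) (hk : 1 ≤ k) (hc : 1 ≤ c)
    (A : Matrix (Fin m) (Fin n) ℝ) (B : Matrix (Fin n) (Fin ρ) ℝ)
    (Θ : Fin n → Fin k) (hΘ : Function.Surjective Θ)
    (a : Fin n → ℝ)
    (ha : ∀ ℓ, a ℓ = enorm2 (fun i => A i ℓ) * enorm2 (fun h => B ℓ h))
    (hapos : ∀ ℓ, 0 < a ℓ)
    (po : Fin n → ℝ) (hpo : ∀ ℓ, po ℓ = a ℓ / ∑ j, a j)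
    (q : Fin k → ℝ)
    (hq : ∀ i, q i = ∑ ℓ ∈ Finset.univ.filter (fun ℓ => Θ ℓ = i), po ℓ) :
    ∑ r : Fin c → Fin k, (∏ i, q (r i)) * frob (A * B - Shat c A B Θ q r) ^ 2 ≤
      (c : ℝ)⁻¹ * ((∑ ℓ, a ℓ) ^ 2 - frob (A * B) ^ 2) := by
  obtain ⟨ℓ0, hℓ0⟩ := hΘ ⟨0, hk⟩
  have hcpos : 0 < c := hc
  have hc' : (c : ℝ) ≠ 0 := Nat.cast_ne_zero.mpr hcpos.ne'
  set S : ℝ := ∑ j, a j with hS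
  have hSpos : 0 < S := Finset.sum_pos (fun ℓ _ => hapos ℓ) ⟨ℓ0, Finset.mem_univ _⟩
  -- block mass
  set aa : Fin k → ℝ := fun j => ∑ ℓ ∈ Finset.univ.filter (fun ℓ => Θ ℓ = j), a ℓ with haa
  have hfib : ∀ j : Fin k, (Finset.univ.filter (fun ℓ => Θ ℓ = j)).Nonempty := by
    intro j
    obtain ⟨ℓ, hℓ⟩ := hΘ j
    exact ⟨ℓ, by simp [hℓ]⟩
  have haapos : ∀ j, 0 < aa j := fun j =>
    Finset.sum_pos (fun ℓ _ => hapos ℓ) (hfib j)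
  have hqeq : ∀ j, q j = aa j / S := by
    intro j
    rw [hq]
    simp_rw [hpo]
    rw [← Finset.sum_div]
  have hqpos : ∀ j, 0 < q j := fun j => by
    rw [hqeq]; exact div_pos (haapos j) hSpos
  have hsumaa : ∑ j, aa j = S := by
    rw [haa, hS]
    exact Finset.sum_fiberwise _ _ _
  have hqs : ∑ j, q j = 1 := by
    simp_rw [hqeq]
    rw [← Finset.sum_div, hsumaa, div_self hSpos.ne']
  -- block matrices
  set M : Fin k → Matrix (Fin m) (Fin ρ) ℝ := fun j => blockProd A B Θ j with hM
  have hMsum : ∀ i h, ∑ j, M j i h = (A * B) i h := by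
    intro i h
    rw [Matrix.mul_apply]
    simp only [hM, blockProd, Matrix.of_apply]
    exact Finset.sum_fiberwise _ _ _
  have hMle : ∀ j, frob (M j) ≤ aa j := by
    intro j
    have hb : M j = ∑ ℓ ∈ Finset.univ.filter (fun ℓ => Θ ℓ = j),
        Matrix.of (fun i h => A i ℓ * B ℓ h) := by
      ext i h
      simp [hM, blockProd, Matrix.sum_apply]
    rw [hb]
    calc frob (∑ ℓ ∈ Finset.univ.filter (fun ℓ => Θ ℓ = j), Matrix.of (fun i h => A i ℓ * B ℓ h))
        ≤ ∑ ℓ ∈ Finset.univ.filter (fun ℓ => Θ ℓ = j), frob (Matrix.of (fun i h => A i ℓ * B ℓ h)) :=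
          frob_sum_le _ _
      _ = aa j := Finset.sum_congr rfl fun ℓ _ => by rw [frob_outer, ← ha]
  -- per-entry variance
  have entry : ∀ i h, ∑ r : Fin c → Fin k,
      (∏ s, q (r s)) * ((A * B - Shat c A B Θ q r) i h) ^ 2
      = (c:ℝ)⁻¹ * ((∑ j, (q j)⁻¹ * (M j i h) ^ 2) - ((A * B) i h) ^ 2) := by
    intro i h
    set g : Fin k → ℝ := fun j => (q j)⁻¹ * M j i h with hg
    have hμ : ∑ j, q j * g j = (A * B) i h := by
      rw [← hMsum i h]
      refine Finset.sum_congr rfl fun j _ => ?_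
      rw [hg]
      rw [← mul_assoc, mul_inv_cancel₀ (hqpos j).ne', one_mul]
    have hent : ∀ r : Fin c → Fin k, (A * B - Shat c A B Θ q r) i h
        = (∑ j, q j * g j) - (c:ℝ)⁻¹ * ∑ t, g (r t) := by
      intro r
      rw [hμ, Matrix.sub_apply]
      congr 1
      simp [Shat, Matrix.smul_apply, Matrix.sum_apply, smul_eq_mul, hg, hM]
    simp_rw [hent]
    rw [var_lemma c k hcpos q g hqs, hμ]
    congr 2
    refine Finset.sum_congr rfl fun j _ => ?_
    rw [hg]
    have : q j ≠ 0 := (hqpos j).ne'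
    field_simp
  -- assemble
  have lhs_eq : ∑ r : Fin c → Fin k, (∏ i, q (r i)) * frob (A * B - Shat c A B Θ q r) ^ 2
      = (c:ℝ)⁻¹ * ((∑ j, (q j)⁻¹ * frob (M j) ^ 2) - frob (A * B) ^ 2) := by
    simp_rw [frob_sq]
    have swap : ∑ r : Fin c → Fin k, (∏ s, q (r s))
          * ∑ i, ∑ h, ((A * B - Shat c A B Θ q r) i h) ^ 2
        = ∑ i, ∑ h, ∑ r : Fin c → Fin k,
          (∏ s, q (r s)) * ((A * B - Shat c A B Θ q r) i h) ^ 2 := by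
      simp_rw [Finset.mul_sum]
      rw [Finset.sum_comm]
      exact Finset.sum_congr rfl fun i _ => Finset.sum_comm
    rw [swap]
    simp_rw [entry]
    simp_rw [← Finset.mul_sum]
    congr 1
    simp_rw [Finset.sum_sub_distrib]
    congr 1
    calc ∑ i : Fin m, ∑ h : Fin ρ, ∑ j : Fin k, (q j)⁻¹ * M j i h ^ 2
        = ∑ i : Fin m, ∑ j : Fin k, ∑ h : Fin ρ, (q j)⁻¹ * M j i h ^ 2 :=
          Finset.sum_congr rfl fun _ _ => Finset.sum_comm
      _ = ∑ j : Fin k, ∑ i : Fin m, ∑ h : Fin ρ, (q j)⁻¹ * M j i h ^ 2 := Finset.sum_comm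
      _ = ∑ j : Fin k, (q j)⁻¹ * ∑ i : Fin m, ∑ h : Fin ρ, M j i h ^ 2 := by
          simp_rw [← Finset.mul_sum]
  rw [lhs_eq]
  have hbound : ∑ j, (q j)⁻¹ * frob (M j) ^ 2 ≤ S ^ 2 := by
    calc ∑ j, (q j)⁻¹ * frob (M j) ^ 2
        ≤ ∑ j, (q j)⁻¹ * aa j ^ 2 := by
          refine Finset.sum_le_sum fun j _ => ?_
          have := pow_le_pow_left₀ (frob_nonneg (M j)) (hMle j) 2
          exact mul_le_mul_of_nonneg_left this (inv_nonneg.mpr (hqpos j).le)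
      _ = ∑ j, S * aa j := by
          refine Finset.sum_congr rfl fun j _ => ?_
          rw [hqeq, inv_div]
          field_simp [(haapos j).ne']
      _ = S ^ 2 := by rw [← Finset.mul_sum, hsumaa, pow_two]
  have hF : 0 ≤ (c:ℝ)⁻¹ := by positivity
  apply mul_le_mul_of_nonneg_left _ hF
  exact sub_le_sub_right hbound _
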